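/- Let X be a finite connected k-regular graph with smallest positive Laplacian eigenvalue λ₁(X). Then for every subset W of the vertices, the number of edges with both endpoints in W satisfies |E(W,W)| ≤ (1/2)·(k − (|V\W|/|V|)·λ₁(X))·|W|. -/

import Mathlib

open Finset Matrix
open scoped RealInnerProductSpace

lemma rayleigh_aux {V : Type*} [Fintype V] [DecidableEq V]
    (G : SimpleGraph V) [DecidableRel G.Adj] (hconn : G.Connected)
    (lam1 : ℝ)
    (hmin : ∀ μ ∈ spectrum ℝ (G.lapMatrix ℝ), 0 < μ → lam1 ≤ μ)
    (x : V → ℝ) (hx : ∑ v, x v = 0) :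
    lam1 * (x ⬝ᵥ x) ≤ x ⬝ᵥ (G.lapMatrix ℝ *ᵥ x) := by
  classical
  have hps := SimpleGraph.posSemidef_lapMatrix ℝ G
  have hL : (G.lapMatrix ℝ).IsHermitian := hps.1
  have hdot : ∀ u v : EuclideanSpace ℝ V, ⟪u, v⟫ = ∑ i, u i * v i := by
    intro u v
    simp [PiLp.inner_apply, RCLike.inner_apply]
    exact Finset.sum_congr rfl fun j _ => mul_comm _ _
  set x' : EuclideanSpace ℝ V := WithLp.toLp 2 x with hx'
  set y' : EuclideanSpace ℝ V := WithLp.toLp 2 (G.lapMatrix ℝ *ᵥ x : V → ℝ) with hy'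
  have hsymm : ∀ v : V → ℝ, v ᵥ* (G.lapMatrix ℝ) = G.lapMatrix ℝ *ᵥ v := by
    intro v
    have hs : (G.lapMatrix ℝ)ᵀ = G.lapMatrix ℝ := G.isSymm_lapMatrix (R := ℝ)
    rw [← hs, vecMul_transpose, hs]
  have hBi : ∀ i, ⟪hL.eigenvectorBasis i, y'⟫
      = hL.eigenvalues i * ⟪x', hL.eigenvectorBasis i⟫ := by
    intro i
    have h1 : ⟪hL.eigenvectorBasis i, y'⟫
        = ⇑(hL.eigenvectorBasis i) ⬝ᵥ (G.lapMatrix ℝ *ᵥ x) := by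
      rw [hdot]; rfl
    rw [h1, Matrix.dotProduct_mulVec, hsymm, hL.mulVec_eigenvectorBasis,
      smul_dotProduct]
    have h2 : ⇑(hL.eigenvectorBasis i) ⬝ᵥ x = ⟪x', hL.eigenvectorBasis i⟫ := by
      rw [hdot]
      exact Finset.sum_congr rfl fun j _ => mul_comm _ _
    rw [h2, smul_eq_mul]
  have hsum1 : x ⬝ᵥ (G.lapMatrix ℝ *ᵥ x)
      = ∑ i, hL.eigenvalues i * ⟪x', hL.eigenvectorBasis i⟫ ^ 2 := by
    have h0 : ⟪x', y'⟫ = x ⬝ᵥ (G.lapMatrix ℝ *ᵥ x) := by rw [hdot]; rfl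
    rw [← h0, ← (hL.eigenvectorBasis).sum_inner_mul_inner x' y']
    refine Finset.sum_congr rfl fun i _ => ?_
    rw [hBi]; ring
  have hsum2 : x ⬝ᵥ x = ∑ i, ⟪x', hL.eigenvectorBasis i⟫ ^ 2 := by
    have h0 : ⟪x', x'⟫ = x ⬝ᵥ x := by rw [hdot]; rfl
    rw [← h0, ← (hL.eigenvectorBasis).sum_inner_mul_inner x' x']
    refine Finset.sum_congr rfl fun i _ => ?_
    rw [real_inner_comm (hL.eigenvectorBasis i) x']; ring
  have hterm : ∀ i, lam1 * ⟪x', hL.eigenvectorBasis i⟫ ^ 2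
      ≤ hL.eigenvalues i * ⟪x', hL.eigenvectorBasis i⟫ ^ 2 := by
    intro i
    rcases lt_or_ge 0 (hL.eigenvalues i) with hμi | hμi
    · exact mul_le_mul_of_nonneg_right
        (hmin _ (hL.eigenvalues_mem_spectrum_real i) hμi) (sq_nonneg _)
    · have hz : hL.eigenvalues i = 0 := le_antisymm hμi (hps.eigenvalues_nonneg i)
      have hker : G.lapMatrix ℝ *ᵥ ⇑(hL.eigenvectorBasis i) = 0 := by
        rw [hL.mulVec_eigenvectorBasis, hz, zero_smul]
      have hker' : Matrix.toLin' (G.lapMatrix ℝ) ⇑(hL.eigenvectorBasis i) = 0 := by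
        rw [Matrix.toLin'_apply]; exact hker
      have hcst := (G.lapMatrix_mulVec_eq_zero_iff_forall_reachable
        (x := ⇑(hL.eigenvectorBasis i))).mp hker
      obtain ⟨v0⟩ := hconn.nonempty
      have hc0 : ⟪x', hL.eigenvectorBasis i⟫ = 0 := by
        rw [hdot]
        have heq : ∀ j, x' j * hL.eigenvectorBasis i j
            = x j * hL.eigenvectorBasis i v0 := fun j =>
          congrArg (fun t => x j * t) (hcst j v0 (hconn j v0))
        rw [Finset.sum_congr rfl fun j _ => heq j, ← Finset.sum_mul, hx, zero_mul]
      rw [hc0, hz]; norm_num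
  rw [hsum1, hsum2, Finset.mul_sum]
  exact Finset.sum_le_sum fun i _ => hterm i

theorem stmt_1 {V : Type*} [Fintype V] [DecidableEq V]
    (G : SimpleGraph V) [DecidableRel G.Adj] (hconn : G.Connected)
    (k : ℕ) (hreg : G.IsRegularOfDegree k)
    (lam1 : ℝ) (hmem : lam1 ∈ spectrum ℝ (G.lapMatrix ℝ)) (hpos : 0 < lam1)
    (hmin : ∀ μ ∈ spectrum ℝ (G.lapMatrix ℝ), 0 < μ → lam1 ≤ μ)
    (W : Finset V) :
    ((Finset.univ.filter fun p : V × V => p.1 ∈ W ∧ p.2 ∈ W ∧ G.Adj p.1 p.2).card : ℝ) / 2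
      ≤ (1 / 2) * ((k : ℝ) - ((Wᶜ.card : ℝ) / (Fintype.card V : ℝ)) * lam1) * (W.card : ℝ) := by
  classical
  set n : ℕ := Fintype.card V with hn'
  set w : ℕ := W.card with hw'
  set χ : V → ℝ := fun v => if v ∈ W then 1 else 0 with hχ
  set x : V → ℝ := fun v => (n : ℝ) * χ v - w with hxdef
  set P : ℝ := ((Finset.univ.filter fun p : V × V =>
    p.1 ∈ W ∧ p.2 ∈ W ∧ G.Adj p.1 p.2).card : ℝ) with hP
  have hsymm : ∀ v : V → ℝ, v ᵥ* (G.lapMatrix ℝ) = G.lapMatrix ℝ *ᵥ v := by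
    intro v
    have hs : (G.lapMatrix ℝ)ᵀ = G.lapMatrix ℝ := G.isSymm_lapMatrix (R := ℝ)
    rw [← hs, vecMul_transpose, hs]
  -- basic sums of χ
  have hχ1 : ∑ v, χ v = (w : ℝ) := by
    simp [hχ, hw']
  have hx0 : ∑ v, x v = 0 := by
    simp only [hxdef, Finset.sum_sub_distrib, ← Finset.mul_sum, hχ1,
      Finset.sum_const, Finset.card_univ, nsmul_eq_mul, ← hn']
    ring
  -- norm of x
  have hsq : x ⬝ᵥ x = (n : ℝ) * w * ((n : ℝ) - w) := by
    have h : ∀ v, x v * x v = (n:ℝ)^2 * χ v - 2*(n:ℝ)*(w:ℝ)*χ v + (w:ℝ)^2 := by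
      intro v
      by_cases h : v ∈ W <;> simp [hxdef, hχ, h] <;> ring
    rw [dotProduct, Finset.sum_congr rfl fun v _ => h v]
    rw [Finset.sum_add_distrib, Finset.sum_sub_distrib, ← Finset.mul_sum,
      ← Finset.mul_sum, hχ1, Finset.sum_const, Finset.card_univ, nsmul_eq_mul, ← hn']
    ring
  -- Laplacian applied to χ
  have hdeg : ∀ u : V, (G.degree u : ℝ) = (k : ℝ) := fun u => by rw [hreg u]
  have hLχ : ∀ u, (G.lapMatrix ℝ *ᵥ χ) u
      = (k : ℝ) * χ u - ∑ v ∈ G.neighborFinset u, χ v := by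
    intro u
    rw [SimpleGraph.lapMatrix_mulVec_apply, hdeg]
  have hnbr : ∀ u, ∑ v ∈ G.neighborFinset u, χ v
      = ∑ v, if G.Adj u v then χ v else 0 := by
    intro u
    rw [SimpleGraph.neighborFinset_eq_filter, Finset.sum_filter]
  -- sum over all u of neighbor sums of χ
  have hS1 : ∑ u, ∑ v ∈ G.neighborFinset u, χ v = (k : ℝ) * w := by
    rw [Finset.sum_congr rfl fun u _ => hnbr u, Finset.sum_comm]
    have h : ∀ v, (∑ u, if G.Adj u v then χ v else 0) = (k:ℝ) * χ v := by
      intro v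
      have hflt : (Finset.univ.filter fun u => G.Adj u v) = G.neighborFinset v := by
        ext u
        simp [SimpleGraph.adj_comm]
      rw [← Finset.sum_filter, hflt, Finset.sum_const,
        G.card_neighborFinset_eq_degree, hreg v, nsmul_eq_mul]
    rw [Finset.sum_congr rfl fun v _ => h v, ← Finset.mul_sum, hχ1]
  -- P as a double sum
  have hPsum : P = ∑ u, ∑ v, (if u ∈ W ∧ v ∈ W ∧ G.Adj u v then (1:ℝ) else 0) := by
    rw [hP, Finset.card_filter]
    push_cast
    rw [Fintype.sum_prod_type]
  have hSP : ∑ u, χ u * ∑ v ∈ G.neighborFinset u, χ v = P := by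
    rw [hPsum]
    refine Finset.sum_congr rfl fun u _ => ?_
    rw [hnbr u, Finset.mul_sum]
    refine Finset.sum_congr rfl fun v _ => ?_
    by_cases hu : u ∈ W <;> by_cases hv : v ∈ W <;> by_cases ha : G.Adj u v <;>
      simp [hχ, hu, hv, ha]
  -- quadratic form of χ
  have hχLχ : χ ⬝ᵥ (G.lapMatrix ℝ *ᵥ χ) = (k:ℝ)*w - P := by
    rw [dotProduct]
    have h : ∀ u, χ u * (G.lapMatrix ℝ *ᵥ χ) u
        = (k:ℝ) * χ u - χ u * ∑ v ∈ G.neighborFinset u, χ v := by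
      intro u
      rw [hLχ u]
      have hχχ : χ u * χ u = χ u := by by_cases h : u ∈ W <;> simp [hχ, h]
      rw [mul_sub, ← mul_assoc, mul_comm (χ u) (k:ℝ), mul_assoc, hχχ]
    rw [Finset.sum_congr rfl fun u _ => h u, Finset.sum_sub_distrib, ← Finset.mul_sum,
      hχ1, hSP]
  -- ones against L χ
  have hones : (fun _ : V => (1:ℝ)) ⬝ᵥ (G.lapMatrix ℝ *ᵥ χ) = 0 := by
    rw [Matrix.dotProduct_mulVec, hsymm, SimpleGraph.lapMatrix_mulVec_const_eq_zero,
      zero_dotProduct]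
  -- quadratic form of x
  have hxfun : x = (n:ℝ) • χ - (w:ℝ) • (fun _ : V => (1:ℝ)) := by
    funext v
    simp [hxdef]
  have hLx : G.lapMatrix ℝ *ᵥ x = (n:ℝ) • (G.lapMatrix ℝ *ᵥ χ) := by
    rw [hxfun, Matrix.mulVec_sub, Matrix.mulVec_smul, Matrix.mulVec_smul,
      SimpleGraph.lapMatrix_mulVec_const_eq_zero, smul_zero, sub_zero]
  have hxLx : x ⬝ᵥ (G.lapMatrix ℝ *ᵥ x) = (n:ℝ)^2 * ((k:ℝ)*w - P) := by
    rw [hLx, dotProduct_smul, hxfun, sub_dotProduct,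
      smul_dotProduct, smul_dotProduct, hχLχ, hones]
    simp only [smul_eq_mul]
    ring
  -- the key spectral inequality
  have key := rayleigh_aux G hconn lam1 hmin x hx0
  rw [hsq, hxLx] at key
  -- numeric bookkeeping
  have hnpos : 0 < n := by
    rw [hn']
    exact Fintype.card_pos_iff.mpr hconn.nonempty
  have hnR : (0:ℝ) < n := by exact_mod_cast hnpos
  have hwle : w ≤ n := by rw [hw', hn']; exact Finset.card_le_univ W
  have hcompl : ((Wᶜ.card : ℕ) : ℝ) = (n:ℝ) - w := by
    rw [Finset.card_compl, ← hn', ← hw', Nat.cast_sub hwle]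
  rw [hcompl]
  have h3 : (((n:ℝ) - w) * lam1 * w) / n ≤ (k:ℝ)*w - P := by
    rw [div_le_iff₀ hnR]
    nlinarith [key, hnR]
  have h4 : ((k:ℝ) - (((n:ℝ) - w)/n) * lam1) * w
      = (k:ℝ)*w - (((n:ℝ) - w) * lam1 * w) / n := by
    ring
  have h5 : P ≤ ((k:ℝ) - (((n:ℝ) - w)/n) * lam1) * w := by
    rw [h4]; linarith
  linarith
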